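/- Let θ : ℝ⁴ → ℝ be smooth with coordinates (w, z, x, y), set F := θ_y, G := θ_x, f := θ_{yz} + θ_{xw} + θ_{xy}² − θ_{xx}θ_{yy}, and let Q = ∂_w∂_x + ∂_z∂_y − F_y∂_x² − G_x∂_y² + (F_x + G_y)∂_x∂_y = ∂_w∂_x + ∂_z∂_y − θ_{yy}∂_x² − θ_{xx}∂_y² + 2θ_{xy}∂_x∂_y. Then Q(F) = ∂_y f and Q(G) = ∂_x f identically. Consequently, if θ satisfies Plebański's second heavenly equation f = 0, then (F, G) = (θ_y, θ_x) satisfies the hyper-Hermitian system Q(F) = 0, Q(G) = 0. -/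

import Mathlib

noncomputable section

/-- Partial derivative of `f` along the `i`-th coordinate direction on `ℝⁿ`.
Coordinates on `ℝ⁴` are `(w, z, x, y) = (0, 1, 2, 3)`. -/
def pd {n : ℕ} (i : Fin n) (f : (Fin n → ℝ) → ℝ) : (Fin n → ℝ) → ℝ :=
  fun x => fderiv ℝ f x (Pi.single i 1)

/-- The operator `Q = ∂_w∂_x + ∂_z∂_y − F_y∂_x² − G_x∂_y² + (F_x + G_y)∂_x∂_y`
applied to `h`. -/
def Qop (F G h : (Fin 4 → ℝ) → ℝ) : (Fin 4 → ℝ) → ℝ :=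
  fun x =>
    pd 0 (pd 2 h) x + pd 1 (pd 3 h) x - pd 3 F x * pd 2 (pd 2 h) x
      - pd 2 G x * pd 3 (pd 3 h) x + (pd 2 F x + pd 3 G x) * pd 2 (pd 3 h) x

/-- The Plebański expression `f = θ_{yz} + θ_{xw} + θ_{xy}² − θ_{xx}θ_{yy}`. -/
def plebF (θ : (Fin 4 → ℝ) → ℝ) : (Fin 4 → ℝ) → ℝ :=
  fun x =>
    pd 1 (pd 3 θ) x + pd 0 (pd 2 θ) x + (pd 2 (pd 3 θ) x) ^ 2
      - pd 2 (pd 2 θ) x * pd 3 (pd 3 θ) x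

private lemma pd_contDiff {n : ℕ} {f : (Fin n → ℝ) → ℝ}
    (hf : ContDiff ℝ (⊤ : ℕ∞) f) (i : Fin n) : ContDiff ℝ (⊤ : ℕ∞) (pd i f) := by
  have h := (contDiff_infty_iff_fderiv.mp hf).2
  exact h.clm_apply contDiff_const

private lemma pd_comm {n : ℕ} {f : (Fin n → ℝ) → ℝ}
    (hf : ContDiff ℝ (⊤ : ℕ∞) f) (i j : Fin n) : pd i (pd j f) = pd j (pd i f) := by
  funext x
  have hd : Differentiable ℝ f := hf.differentiable (by simp)
  have hf' : ContDiff ℝ (⊤ : ℕ∞) (fderiv ℝ f) := (contDiff_infty_iff_fderiv.mp hf).2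
  have hfd : DifferentiableAt ℝ (fderiv ℝ f) x := (hf'.differentiable (by simp)) x
  have key : ∀ v w, fderiv ℝ (fderiv ℝ f) x v w = fderiv ℝ (fderiv ℝ f) x w v :=
    second_derivative_symmetric (fun y => (hd y).hasFDerivAt) hfd.hasFDerivAt
  have e : ∀ (v w : Fin n → ℝ),
      fderiv ℝ (fun y => fderiv ℝ f y w) x v = fderiv ℝ (fderiv ℝ f) x v w := by
    intro v w
    rw [fderiv_clm_apply hfd (differentiableAt_const _)]
    simp
  show fderiv ℝ (fun y => fderiv ℝ f y (Pi.single j 1)) x (Pi.single i 1)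
      = fderiv ℝ (fun y => fderiv ℝ f y (Pi.single i 1)) x (Pi.single j 1)
  rw [e, e, key]

private lemma pd_plebF (θ : (Fin 4 → ℝ) → ℝ) (hθ : ContDiff ℝ (⊤ : ℕ∞) θ)
    (k : Fin 4) (x : Fin 4 → ℝ) :
    pd k (plebF θ) x =
      pd k (pd 1 (pd 3 θ)) x + pd k (pd 0 (pd 2 θ)) x
        + 2 * pd 2 (pd 3 θ) x * pd k (pd 2 (pd 3 θ)) x
        - (pd k (pd 2 (pd 2 θ)) x * pd 3 (pd 3 θ) x
            + pd 2 (pd 2 θ) x * pd k (pd 3 (pd 3 θ)) x) := by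
  have hA : DifferentiableAt ℝ (pd 1 (pd 3 θ)) x :=
    ((pd_contDiff (pd_contDiff hθ 3) 1).differentiable (by simp)) x
  have hB : DifferentiableAt ℝ (pd 0 (pd 2 θ)) x :=
    ((pd_contDiff (pd_contDiff hθ 2) 0).differentiable (by simp)) x
  have hC : DifferentiableAt ℝ (pd 2 (pd 3 θ)) x :=
    ((pd_contDiff (pd_contDiff hθ 3) 2).differentiable (by simp)) x
  have hD : DifferentiableAt ℝ (pd 2 (pd 2 θ)) x :=
    ((pd_contDiff (pd_contDiff hθ 2) 2).differentiable (by simp)) x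
  have hE : DifferentiableAt ℝ (pd 3 (pd 3 θ)) x :=
    ((pd_contDiff (pd_contDiff hθ 3) 3).differentiable (by simp)) x
  have hpleb : plebF θ = fun y =>
      pd 1 (pd 3 θ) y + pd 0 (pd 2 θ) y + pd 2 (pd 3 θ) y * pd 2 (pd 3 θ) y
        - pd 2 (pd 2 θ) y * pd 3 (pd 3 θ) y := by
    funext y; simp [plebF, sq]
  have H : HasFDerivAt (plebF θ)
      ((fderiv ℝ (pd 1 (pd 3 θ)) x + fderiv ℝ (pd 0 (pd 2 θ)) x
          + (pd 2 (pd 3 θ) x • fderiv ℝ (pd 2 (pd 3 θ)) x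
              + pd 2 (pd 3 θ) x • fderiv ℝ (pd 2 (pd 3 θ)) x))
        - (pd 2 (pd 2 θ) x • fderiv ℝ (pd 3 (pd 3 θ)) x
            + pd 3 (pd 3 θ) x • fderiv ℝ (pd 2 (pd 2 θ)) x)) x := by
    rw [hpleb]
    exact ((hA.hasFDerivAt.add hB.hasFDerivAt).add
      (hC.hasFDerivAt.mul hC.hasFDerivAt)).sub (hD.hasFDerivAt.mul hE.hasFDerivAt)
  have := H.fderiv
  simp only [pd, this, ContinuousLinearMap.add_apply, ContinuousLinearMap.sub_apply,
    ContinuousLinearMap.smul_apply, smul_eq_mul]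
  ring

/-- For `F = θ_y`, `G = θ_x` one has `Q(F) = ∂_y f` and `Q(G) = ∂_x f`
identically; consequently, if `θ` solves Plebański's second heavenly equation
`f = 0`, then `(F, G)` solves the hyper-Hermitian system `Q(F) = 0`, `Q(G) = 0`. -/
theorem heavenly_gives_hyperhermitian
    (θ : (Fin 4 → ℝ) → ℝ)
    (hθ : ContDiff ℝ (⊤ : ℕ∞) θ) :
    (∀ x : Fin 4 → ℝ,
      Qop (pd 3 θ) (pd 2 θ) (pd 3 θ) x = pd 3 (plebF θ) x ∧
      Qop (pd 3 θ) (pd 2 θ) (pd 2 θ) x = pd 2 (plebF θ) x) ∧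
    ((∀ x : Fin 4 → ℝ, plebF θ x = 0) →
      ∀ x : Fin 4 → ℝ,
        Qop (pd 3 θ) (pd 2 θ) (pd 3 θ) x = 0 ∧
        Qop (pd 3 θ) (pd 2 θ) (pd 2 θ) x = 0) := by
  have main : ∀ x : Fin 4 → ℝ,
      Qop (pd 3 θ) (pd 2 θ) (pd 3 θ) x = pd 3 (plebF θ) x ∧
      Qop (pd 3 θ) (pd 2 θ) (pd 2 θ) x = pd 2 (plebF θ) x := by
    intro x
    constructor
    · rw [pd_plebF θ hθ 3 x]
      simp only [Qop, pd_comm hθ 3 2, pd_comm (pd_contDiff hθ 3) 3 1,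
        pd_comm (pd_contDiff hθ 2) 3 0, pd_comm (pd_contDiff hθ 3) 3 2,
        pd_comm (pd_contDiff hθ 2) 3 2]
      ring
    · rw [pd_plebF θ hθ 2 x]
      simp only [Qop, pd_comm hθ 3 2, pd_comm (pd_contDiff hθ 3) 3 2,
        pd_comm (pd_contDiff hθ 3) 2 1, pd_comm (pd_contDiff hθ 2) 2 0]
      ring
  refine ⟨main, fun h x => ?_⟩
  have hz : plebF θ = fun _ => (0 : ℝ) := funext h
  have hz3 : pd 3 (plebF θ) x = 0 := by rw [hz]; simp [pd]
  have hz2 : pd 2 (plebF θ) x = 0 := by rw [hz]; simp [pd]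
  exact ⟨(main x).1.trans hz3, (main x).2.trans hz2⟩
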